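/- Fix a constant q > 0 and the bowl transform ψ : ℝ^p → ℝ^(p+1). Then ψ is Lipschitz continuous: there exists a constant L > 0 such that ‖ψ(x) − ψ(y)‖ ≤ L·‖x − y‖ for all x, y ∈ ℝ^p. -/

import Mathlib

open Real

/-- The bowl transform `ψ : ℝ^p → ℝ^(p+1)`.  With `u(x) = tanh(‖x‖/q)`, the first `p`
coordinates are `v₁(x) = 10·u(x)²·(1−u(x))²·x` and the last coordinate is
`v₂(x) = 10·u(x)⁶·(1−u(x))²`. -/
noncomputable def bowl (p : ℕ) (q : ℝ) (x : EuclideanSpace ℝ (Fin p)) :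
    EuclideanSpace ℝ (Fin (p + 1)) :=
  WithLp.toLp 2 (Fin.snoc
    (fun i : Fin p =>
      10 * Real.tanh (‖x‖ / q) ^ 2 * (1 - Real.tanh (‖x‖ / q)) ^ 2 * x i)
    (10 * Real.tanh (‖x‖ / q) ^ 6 * (1 - Real.tanh (‖x‖ / q)) ^ 2) : Fin (p + 1) → ℝ)

lemma tanh_hasDerivAt' (x : ℝ) : HasDerivAt Real.tanh (1 / Real.cosh x ^ 2) x := by
  have h := (Real.hasDerivAt_sinh x).div (Real.hasDerivAt_cosh x) (ne_of_gt (Real.cosh_pos x))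
  have e : (Real.cosh x * Real.cosh x - Real.sinh x * Real.sinh x) / Real.cosh x ^ 2
      = 1 / Real.cosh x ^ 2 := by
    have h2 := Real.cosh_sq_sub_sinh_sq x
    have : Real.cosh x * Real.cosh x - Real.sinh x * Real.sinh x = 1 := by nlinarith
    rw [this]
  rw [e] at h
  have : (fun y => Real.sinh y / Real.cosh y) = Real.tanh := by
    funext y; rw [Real.tanh_eq_sinh_div_cosh]
  rw [← this]; exact h

lemma tanh_div_hasDerivAt (q t : ℝ) (hq : q ≠ 0) :
    HasDerivAt (fun s : ℝ => Real.tanh (s / q)) (1 / Real.cosh (t / q) ^ 2 * (1 / q)) t := by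
  have h1 : HasDerivAt (fun s : ℝ => s / q) (1 / q) t := by
    simpa using (hasDerivAt_id t).div_const q
  exact (tanh_hasDerivAt' (t / q)).comp t h1

lemma tanh_nonneg' {r : ℝ} (hr : 0 ≤ r) : 0 ≤ Real.tanh r := by
  rw [Real.tanh_eq_sinh_div_cosh]
  exact div_nonneg (Real.sinh_nonneg_iff.mpr hr) (Real.cosh_pos r).le

lemma tanh_le_one' (r : ℝ) : Real.tanh r ≤ 1 := by
  rw [Real.tanh_eq_sinh_div_cosh]
  exact (div_le_one (Real.cosh_pos r)).mpr (Real.sinh_lt_cosh r).le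

lemma key_ineq {r : ℝ} (hr : 0 ≤ r) : r * (1 - Real.tanh r) ≤ 1 := by
  have hc := Real.cosh_pos r
  have h1 : 1 - Real.tanh r = Real.exp (-r) / Real.cosh r := by
    rw [Real.tanh_eq_sinh_div_cosh, ← Real.cosh_sub_sinh]
    field_simp
  have h3 : r * Real.exp (-r) ≤ 1 := by
    have h := Real.add_one_le_exp r
    have h2 : r * Real.exp (-r) ≤ Real.exp r * Real.exp (-r) :=
      mul_le_mul_of_nonneg_right (by linarith) (Real.exp_pos _).le
    rwa [← Real.exp_add, add_neg_cancel, Real.exp_zero] at h2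
  rw [h1]
  have h4 : Real.exp (-r) / Real.cosh r ≤ Real.exp (-r) :=
    div_le_self (Real.exp_pos _).le (Real.one_le_cosh r)
  calc r * (Real.exp (-r) / Real.cosh r) ≤ r * Real.exp (-r) :=
        mul_le_mul_of_nonneg_left h4 hr
    _ ≤ 1 := h3

noncomputable def phi1 (q t : ℝ) : ℝ :=
  10 * Real.tanh (t / q) ^ 2 * (1 - Real.tanh (t / q)) ^ 2

noncomputable def phi3fun (q t : ℝ) : ℝ :=
  10 * Real.tanh (t / q) ^ 6 * (1 - Real.tanh (t / q)) ^ 2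

lemma phi1_nonneg (q t : ℝ) : 0 ≤ phi1 q t := by unfold phi1; positivity

lemma phi1_le {q : ℝ} (hq : 0 < q) {t : ℝ} (ht : 0 ≤ t) : phi1 q t ≤ 10 := by
  have h1 : 0 ≤ Real.tanh (t / q) := tanh_nonneg' (div_nonneg ht hq.le)
  have h2 : Real.tanh (t / q) ≤ 1 := tanh_le_one' _
  have a1 : Real.tanh (t / q) ^ 2 <= 1 := by nlinarith
  have a2 : (1 - Real.tanh (t / q)) ^ 2 <= 1 := by nlinarith
  unfold phi1
  nlinarith [sq_nonneg (Real.tanh (t / q)), sq_nonneg (1 - Real.tanh (t / q))]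

lemma derivBound2 {u d t : ℝ} (hu0 : 0 ≤ u) (hu1 : u ≤ 1)
    (hB0 : 0 ≤ t * (1 - u) * d) (hB1 : t * (1 - u) * d ≤ 1) :
    |1 * (10 * u ^ 2 * (1 - u) ^ 2) +
        t * (10 * ((2 : ℕ) * u ^ 1 * d) * (1 - u) ^ 2 +
          10 * u ^ 2 * ((2 : ℕ) * (1 - u) ^ 1 * (0 - d)))| ≤ 50 := by
  have hEeq : 1 * (10 * u ^ 2 * (1 - u) ^ 2) +
        t * (10 * ((2 : ℕ) * u ^ 1 * d) * (1 - u) ^ 2 +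
          10 * u ^ 2 * ((2 : ℕ) * (1 - u) ^ 1 * (0 - d)))
      = 10 * u ^ 2 * (1 - u) ^ 2 + 20 * (t * (1 - u) * d) * (u * (1 - u))
        - 20 * (t * (1 - u) * d) * u ^ 2 := by push_cast; ring
  rw [hEeq]
  generalize t * (1 - u) * d = B at hB0 hB1
  have h1u : 0 ≤ 1 - u := by linarith
  have hx0 : 0 ≤ u * (1 - u) := mul_nonneg hu0 h1u
  have hx : u * (1 - u) ≤ 1 := by nlinarith
  have hy2 : (u * (1 - u)) ^ 2 ≤ 1 := by nlinarith
  have e1 : 10 * u ^ 2 * (1 - u) ^ 2 ≤ 10 := by nlinarith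
  have e6 : 0 ≤ 10 * u ^ 2 * (1 - u) ^ 2 := by positivity
  have eB1 : B * (u * (1 - u)) ≤ 1 := mul_le_one₀ hB1 hx0 hx
  have eB1' : 0 ≤ B * (u * (1 - u)) := mul_nonneg hB0 hx0
  have hu2 : u ^ 2 ≤ 1 := by nlinarith
  have eB2 : B * u ^ 2 ≤ 1 := mul_le_one₀ hB1 (sq_nonneg u) hu2
  have eB2' : 0 ≤ B * u ^ 2 := mul_nonneg hB0 (sq_nonneg u)
  rw [abs_le]
  constructor <;> nlinarith

lemma derivBound3 {u d : ℝ} (hu0 : 0 ≤ u) (hu1 : u ≤ 1) (hd0 : 0 ≤ d) {M : ℝ}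
    (hdM : d ≤ M) :
    |10 * ((6 : ℕ) * u ^ 5 * d) * (1 - u) ^ 2 +
        10 * u ^ 6 * ((2 : ℕ) * (1 - u) ^ 1 * (0 - d))| ≤ 80 * M := by
  have h1u : 0 ≤ 1 - u := by linarith
  have hu5 : u ^ 5 ≤ 1 := pow_le_one₀ hu0 hu1
  have hu5' : 0 ≤ u ^ 5 := by positivity
  have hu6 : u ^ 6 ≤ 1 := pow_le_one₀ hu0 hu1
  have hu6' : 0 ≤ u ^ 6 := by positivity
  have h1u2 : (1 - u) ^ 2 ≤ 1 := by nlinarith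
  have h1u' : 1 - u ≤ 1 := by linarith
  have hM : 0 ≤ M := hd0.trans hdM
  have hEeq : 10 * ((6 : ℕ) * u ^ 5 * d) * (1 - u) ^ 2 +
        10 * u ^ 6 * ((2 : ℕ) * (1 - u) ^ 1 * (0 - d))
      = d * (60 * (u ^ 5 * (1 - u) ^ 2) - 20 * (u ^ 6 * (1 - u))) := by push_cast; ring
  rw [hEeq, abs_le]
  have p1 : 0 ≤ u ^ 5 * (1 - u) ^ 2 := by positivity
  have p2 : 0 ≤ u ^ 6 * (1 - u) := by positivity
  have p3 : u ^ 5 * (1 - u) ^ 2 ≤ 1 := mul_le_one₀ hu5 (sq_nonneg _) h1u2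
  have p4 : u ^ 6 * (1 - u) ≤ 1 := mul_le_one₀ hu6 h1u h1u'
  constructor <;> nlinarith [mul_le_mul_of_nonneg_left p3 hd0, mul_le_mul_of_nonneg_left p4 hd0,
    mul_nonneg hd0 p1, mul_nonneg hd0 p2, mul_le_mul_of_nonneg_right hdM p1,
    mul_le_mul_of_nonneg_right hdM p2]

lemma tanh_facts {q : ℝ} (hq : 0 < q) {t : ℝ} (ht : 0 ≤ t) :
    0 ≤ Real.tanh (t / q) ∧ Real.tanh (t / q) ≤ 1 ∧
      0 ≤ 1 / Real.cosh (t / q) ^ 2 * (1 / q) ∧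
      1 / Real.cosh (t / q) ^ 2 * (1 / q) ≤ 1 / q ∧
      t * (1 - Real.tanh (t / q)) ≤ q := by
  have htq : 0 ≤ t / q := div_nonneg ht hq.le
  have hcosh := Real.one_le_cosh (t / q)
  have hcosh0 : (0:ℝ) < Real.cosh (t / q) := Real.cosh_pos _
  refine ⟨tanh_nonneg' htq, tanh_le_one' _, by positivity, ?_, ?_⟩
  · have hc1 : 1 / Real.cosh (t / q) ^ 2 ≤ 1 := by
      rw [div_le_one (by positivity)]
      nlinarith
    have := mul_le_mul_of_nonneg_right hc1 (le_of_lt (one_div_pos.mpr hq))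
    simpa using this
  · have hkey : (t / q) * (1 - Real.tanh (t / q)) ≤ 1 := key_ineq htq
    have := mul_le_mul_of_nonneg_left hkey hq.le
    rw [mul_one] at this
    calc t * (1 - Real.tanh (t / q)) = q * (t / q * (1 - Real.tanh (t / q))) := by
          field_simp
      _ ≤ q := this

lemma phi2_lip {q : ℝ} (hq : 0 < q) {a b : ℝ} (ha : 0 ≤ a) (hb : 0 ≤ b) :
    |a * phi1 q a - b * phi1 q b| ≤ 50 * |a - b| := by
  have hq' : q ≠ 0 := hq.ne'
  have key := (convex_Ici (0 : ℝ)).norm_image_sub_le_of_norm_hasDerivWithin_le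
    (f := fun s => s * phi1 q s)
    (f' := fun t => 1 * phi1 q t +
      t * (10 * ((2 : ℕ) * Real.tanh (t / q) ^ 1 * (1 / Real.cosh (t / q) ^ 2 * (1 / q))) *
          (1 - Real.tanh (t / q)) ^ 2 +
        10 * Real.tanh (t / q) ^ 2 *
          ((2 : ℕ) * (1 - Real.tanh (t / q)) ^ 1 * (0 - 1 / Real.cosh (t / q) ^ 2 * (1 / q)))))
    (C := 50) (s := Set.Ici 0)
    (fun t _ => by
      have hu := tanh_div_hasDerivAt q t hq'
      have h2 : HasDerivAt (fun s => 10 * Real.tanh (s / q) ^ 2)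
          (10 * ((2 : ℕ) * Real.tanh (t / q) ^ 1 * (1 / Real.cosh (t / q) ^ 2 * (1 / q)))) t :=
        (hu.pow 2).const_mul 10
      have h3 : HasDerivAt (fun s => (1 - Real.tanh (s / q)) ^ 2)
          ((2 : ℕ) * (1 - Real.tanh (t / q)) ^ 1 *
            (0 - 1 / Real.cosh (t / q) ^ 2 * (1 / q))) t :=
        ((hasDerivAt_const t (1 : ℝ)).sub hu).pow 2
      have hmain := (hasDerivAt_id t).mul (h2.mul h3)
      have h : HasDerivAt (fun s => s * phi1 q s)
          (1 * phi1 q t +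
            t * (10 * ((2 : ℕ) * Real.tanh (t / q) ^ 1 * (1 / Real.cosh (t / q) ^ 2 * (1 / q))) *
                (1 - Real.tanh (t / q)) ^ 2 +
              10 * Real.tanh (t / q) ^ 2 *
                ((2 : ℕ) * (1 - Real.tanh (t / q)) ^ 1 *
                  (0 - 1 / Real.cosh (t / q) ^ 2 * (1 / q))))) t := by
        unfold phi1; exact hmain
      exact h.hasDerivWithinAt)
    (fun t ht => by
      rw [Set.mem_Ici] at ht
      obtain ⟨hu0, hu1, hd0, hd1, htu⟩ := tanh_facts hq ht
      have h1u : 0 ≤ 1 - Real.tanh (t / q) := by linarith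
      have hB0 : 0 ≤ t * (1 - Real.tanh (t / q)) * (1 / Real.cosh (t / q) ^ 2 * (1 / q)) :=
        mul_nonneg (mul_nonneg ht h1u) hd0
      have hB1 : t * (1 - Real.tanh (t / q)) * (1 / Real.cosh (t / q) ^ 2 * (1 / q)) ≤ 1 := by
        calc t * (1 - Real.tanh (t / q)) * (1 / Real.cosh (t / q) ^ 2 * (1 / q))
            ≤ q * (1 / q) := mul_le_mul htu hd1 hd0 hq.le
          _ = 1 := by field_simp
      rw [Real.norm_eq_abs]
      unfold phi1
      exact derivBound2 hu0 hu1 hB0 hB1)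
    (Set.mem_Ici.mpr hb) (Set.mem_Ici.mpr ha)
  simpa [Real.norm_eq_abs] using key

lemma phi3_lip {q : ℝ} (hq : 0 < q) {a b : ℝ} (ha : 0 ≤ a) (hb : 0 ≤ b) :
    |phi3fun q a - phi3fun q b| ≤ 80 / q * |a - b| := by
  have hq' : q ≠ 0 := hq.ne'
  have key := (convex_Ici (0 : ℝ)).norm_image_sub_le_of_norm_hasDerivWithin_le
    (f := fun s => phi3fun q s)
    (f' := fun t =>
      10 * ((6 : ℕ) * Real.tanh (t / q) ^ 5 * (1 / Real.cosh (t / q) ^ 2 * (1 / q))) *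
          (1 - Real.tanh (t / q)) ^ 2 +
        10 * Real.tanh (t / q) ^ 6 *
          ((2 : ℕ) * (1 - Real.tanh (t / q)) ^ 1 * (0 - 1 / Real.cosh (t / q) ^ 2 * (1 / q))))
    (C := 80 / q) (s := Set.Ici 0)
    (fun t _ => by
      have hu := tanh_div_hasDerivAt q t hq'
      have h2 : HasDerivAt (fun s => 10 * Real.tanh (s / q) ^ 6)
          (10 * ((6 : ℕ) * Real.tanh (t / q) ^ 5 * (1 / Real.cosh (t / q) ^ 2 * (1 / q)))) t :=
        (hu.pow 6).const_mul 10
      have h3 : HasDerivAt (fun s => (1 - Real.tanh (s / q)) ^ 2)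
          ((2 : ℕ) * (1 - Real.tanh (t / q)) ^ 1 *
            (0 - 1 / Real.cosh (t / q) ^ 2 * (1 / q))) t :=
        ((hasDerivAt_const t (1 : ℝ)).sub hu).pow 2
      have hmain := h2.mul h3
      have h : HasDerivAt (fun s => phi3fun q s)
          (10 * ((6 : ℕ) * Real.tanh (t / q) ^ 5 * (1 / Real.cosh (t / q) ^ 2 * (1 / q))) *
              (1 - Real.tanh (t / q)) ^ 2 +
            10 * Real.tanh (t / q) ^ 6 *
              ((2 : ℕ) * (1 - Real.tanh (t / q)) ^ 1 *
                (0 - 1 / Real.cosh (t / q) ^ 2 * (1 / q)))) t := by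
        unfold phi3fun; exact hmain
      exact h.hasDerivWithinAt)
    (fun t ht => by
      rw [Set.mem_Ici] at ht
      obtain ⟨hu0, hu1, hd0, hd1, _⟩ := tanh_facts hq ht
      rw [Real.norm_eq_abs]
      have h80 : (80 : ℝ) / q = 80 * (1 / q) := by ring
      rw [h80]
      exact derivBound3 hu0 hu1 hd0 hd1)
    (Set.mem_Ici.mpr hb) (Set.mem_Ici.mpr ha)
  simpa [Real.norm_eq_abs] using key

/-- for `q > 0`, the bowl transform `ψ : ℝ^p → ℝ^(p+1)` is Lipschitz:
there is `L > 0` with `‖ψ(x) − ψ(y)‖ ≤ L·‖x − y‖` for all `x, y`. -/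
theorem bowl_lipschitz (p : ℕ) (q : ℝ) (hq : 0 < q) :
    ∃ L : ℝ, 0 < L ∧ ∀ x y : EuclideanSpace ℝ (Fin p),
      ‖bowl p q x - bowl p q y‖ ≤ L * ‖x - y‖ := by
  refine ⟨70 + 80 / q, by positivity, fun x y => ?_⟩
  have ha : (0:ℝ) ≤ ‖x‖ := norm_nonneg x
  have hb : (0:ℝ) ≤ ‖y‖ := norm_nonneg y
  have hab : |‖x‖ - ‖y‖| ≤ ‖x - y‖ := abs_norm_sub_norm_le x y
  set w : EuclideanSpace ℝ (Fin p) := phi1 q ‖x‖ • x - phi1 q ‖y‖ • y with hw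
  set c : ℝ := phi3fun q ‖x‖ - phi3fun q ‖y‖ with hcc
  -- decomposition of the norm
  have hdecomp : ‖bowl p q x - bowl p q y‖ ≤ ‖w‖ + |c| := by
    have happ : ∀ i : Fin p,
        (bowl p q x - bowl p q y) (Fin.castSucc i) = w i := by
      intro i
      simp only [hw, bowl, PiLp.sub_apply, PiLp.smul_apply, WithLp.ofLp_toLp, Fin.snoc_castSucc,
        smul_eq_mul, phi1]
    have hlast : (bowl p q x - bowl p q y) (Fin.last p) = c := by
      simp only [hcc, bowl, phi3fun, PiLp.sub_apply, WithLp.ofLp_toLp, Fin.snoc_last]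
    have hsum : ∑ i : Fin p, ‖(bowl p q x - bowl p q y) (Fin.castSucc i)‖ ^ 2
        = ‖w‖ ^ 2 := by
      rw [PiLp.norm_sq_eq_of_L2]
      exact Finset.sum_congr rfl fun i _ => by rw [happ i]
    rw [EuclideanSpace.norm_eq, Fin.sum_univ_castSucc, hsum, hlast]
    have hle : ‖w‖ ^ 2 + ‖c‖ ^ 2 ≤ (‖w‖ + |c|) ^ 2 := by
      rw [Real.norm_eq_abs]
      nlinarith [norm_nonneg w, abs_nonneg c, mul_nonneg (norm_nonneg w) (abs_nonneg c)]
    calc Real.sqrt (‖w‖ ^ 2 + ‖c‖ ^ 2) ≤ Real.sqrt ((‖w‖ + |c|) ^ 2) :=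
          Real.sqrt_le_sqrt hle
      _ = ‖w‖ + |c| := Real.sqrt_sq (by positivity)
  -- bound on the scalar coefficient difference times ‖y‖
  have h60 : |phi1 q ‖x‖ - phi1 q ‖y‖| * ‖y‖ ≤ 60 * ‖x - y‖ := by
    have hid : ‖y‖ * (phi1 q ‖x‖ - phi1 q ‖y‖)
        = (‖x‖ * phi1 q ‖x‖ - ‖y‖ * phi1 q ‖y‖) - (‖x‖ - ‖y‖) * phi1 q ‖x‖ := by ring
    have h1 : |phi1 q ‖x‖ - phi1 q ‖y‖| * ‖y‖ = |‖y‖ * (phi1 q ‖x‖ - phi1 q ‖y‖)| := by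
      rw [abs_mul, abs_of_nonneg hb]; ring
    have h2 : |(‖x‖ - ‖y‖) * phi1 q ‖x‖| ≤ ‖x - y‖ * 10 := by
      rw [abs_mul, abs_of_nonneg (phi1_nonneg q ‖x‖)]
      exact mul_le_mul hab (phi1_le hq ha) (phi1_nonneg q ‖x‖) (norm_nonneg _)
    have h3 : |‖x‖ * phi1 q ‖x‖ - ‖y‖ * phi1 q ‖y‖| ≤ 50 * ‖x - y‖ :=
      (phi2_lip hq ha hb).trans (by nlinarith)
    calc |phi1 q ‖x‖ - phi1 q ‖y‖| * ‖y‖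
        = |(‖x‖ * phi1 q ‖x‖ - ‖y‖ * phi1 q ‖y‖) - (‖x‖ - ‖y‖) * phi1 q ‖x‖| := by
          rw [h1, hid]
      _ ≤ |‖x‖ * phi1 q ‖x‖ - ‖y‖ * phi1 q ‖y‖| + |(‖x‖ - ‖y‖) * phi1 q ‖x‖| :=
          abs_sub _ _
      _ ≤ 50 * ‖x - y‖ + ‖x - y‖ * 10 := add_le_add h3 h2
      _ = 60 * ‖x - y‖ := by ring
  have hwle : ‖w‖ ≤ 70 * ‖x - y‖ := by
    have hsplit : w = phi1 q ‖x‖ • (x - y) + (phi1 q ‖x‖ - phi1 q ‖y‖) • y := by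
      rw [hw, smul_sub, sub_smul]; abel
    calc ‖w‖ ≤ ‖phi1 q ‖x‖ • (x - y)‖ + ‖(phi1 q ‖x‖ - phi1 q ‖y‖) • y‖ := by
          rw [hsplit]; exact norm_add_le _ _
      _ = |phi1 q ‖x‖| * ‖x - y‖ + |phi1 q ‖x‖ - phi1 q ‖y‖| * ‖y‖ := by
          rw [norm_smul, norm_smul, Real.norm_eq_abs, Real.norm_eq_abs]
      _ ≤ 10 * ‖x - y‖ + 60 * ‖x - y‖ := by
          refine add_le_add ?_ h60
          rw [abs_of_nonneg (phi1_nonneg q ‖x‖)]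
          exact mul_le_mul_of_nonneg_right (phi1_le hq ha) (norm_nonneg _)
      _ = 70 * ‖x - y‖ := by ring
  have hcle : |c| ≤ 80 / q * ‖x - y‖ := by
    rw [hcc]
    exact (phi3_lip hq ha hb).trans
      (mul_le_mul_of_nonneg_left hab (by positivity))
  calc ‖bowl p q x - bowl p q y‖ ≤ ‖w‖ + |c| := hdecomp
    _ ≤ 70 * ‖x - y‖ + 80 / q * ‖x - y‖ := add_le_add hwle hcle
    _ = (70 + 80 / q) * ‖x - y‖ := by ring
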